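/- arXiv:2510.03752 — 4 statements merged into one kernel-verified Lean document; each statement's English description precedes it below -/
import Mathlib

section
/- For matrices A and B over a field, the rank of their Kronecker product equals the product of their ranks: rank(A ⊗ B) = rank(A)·rank(B). -/
open Matrix Kronecker

open TensorProduct in
lemma finrank_range_tensor_map {F M N P Q : Type*} [Field F]
    [AddCommGroup M] [Module F M] [AddCommGroup N] [Module F N]
    [AddCommGroup P] [Module F P] [AddCommGroup Q] [Module F Q]
    [FiniteDimensional F M] [FiniteDimensional F N]
    (f : M →ₗ[F] P) (g : N →ₗ[F] Q) :
    Module.finrank F (LinearMap.range (TensorProduct.map f g)) =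
      Module.finrank F (LinearMap.range f) * Module.finrank F (LinearMap.range g) := by
  have hcomp : TensorProduct.map f g =
      (mapIncl (LinearMap.range f) (LinearMap.range g)) ∘ₗ
        TensorProduct.map f.rangeRestrict g.rangeRestrict := by
    rw [mapIncl, ← TensorProduct.map_comp]
    congr 1
  have hsurj : Function.Surjective (TensorProduct.map f.rangeRestrict g.rangeRestrict) :=
    TensorProduct.map_surjective f.surjective_rangeRestrict g.surjective_rangeRestrict
  have hrange : LinearMap.range (TensorProduct.map f g) =
      LinearMap.range (mapIncl (LinearMap.range f) (LinearMap.range g)) := by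
    rw [hcomp, LinearMap.range_comp, LinearMap.range_eq_top.mpr hsurj, Submodule.map_top]
  rw [hrange, ← Module.finrank_tensorProduct]
  exact (LinearEquiv.ofInjective _
    (Module.Flat.tensorProduct_mapIncl_injective_of_right _ _)).symm.finrank_eq

/-- rank(A ⊗ B) = rank(A)·rank(B) over a field. -/
theorem rank_kronecker {F : Type*} [Field F] (n₁ m₁ n₂ m₂ : ℕ)
    (A : Matrix (Fin n₁) (Fin m₁) F) (B : Matrix (Fin n₂) (Fin m₂) F) :
    (A ⊗ₖ B).rank = A.rank * B.rank := by
  let bn₁ := Pi.basisFun F (Fin n₁)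
  let bm₁ := Pi.basisFun F (Fin m₁)
  let bn₂ := Pi.basisFun F (Fin n₂)
  let bm₂ := Pi.basisFun F (Fin m₂)
  rw [rank_eq_finrank_range_toLin (A ⊗ₖ B) (bn₁.tensorProduct bn₂) (bm₁.tensorProduct bm₂),
    Matrix.toLin_kronecker, finrank_range_tensor_map,
    rank_eq_finrank_range_toLin A bn₁ bm₁, rank_eq_finrank_range_toLin B bn₂ bm₂]
end

section
/- Let t divide n, set r = n/t. For i ∈ [t], let E_{ii} ∈ F_2^{t×t} be the matrix unit with 1 in position (i,i), let P_i = E_{ii} ⊗ I_{n/t}, let p_i = vec(P_i) ∈ F_2^{n²}, and let P be the t×n² matrix whose i-th row is p_iᵀ. Then for all A, B ∈ F_2^{n×n}, the t-block-wise inner product satisfies ⟨A,B⟩_t = P·(A ⊗ B)·Pᵀ. -/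
open Matrix Kronecker

/-- The t-block-wise inner product (n = t·m, indices encoded as pairs). -/
def blockIP {t m : ℕ} (A B : Matrix (Fin t × Fin m) (Fin t × Fin m) (ZMod 2)) :
    Matrix (Fin t) (Fin t) (ZMod 2) :=
  Matrix.of fun i j => ∑ a, ∑ b, A (i, a) (j, b) * B (i, a) (j, b)

/-- Column-wise vectorization: `vec M (j, i) = M i j`. -/
def vec {l m : Type*} {R : Type*} (M : Matrix l m R) : m × l → R := fun p => M p.2 p.1

/-- P_i = E_{ii} ⊗ I_{n/t}. -/
def Pmat (t m : ℕ) (i : Fin t) : Matrix (Fin t × Fin m) (Fin t × Fin m) (ZMod 2) :=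
  Matrix.single i i (1 : ZMod 2) ⊗ₖ (1 : Matrix (Fin m) (Fin m) (ZMod 2))

/-- The t×n² matrix P whose i-th row is vec(P_i)ᵀ. -/
def Pbig (t m : ℕ) : Matrix (Fin t) ((Fin t × Fin m) × (Fin t × Fin m)) (ZMod 2) :=
  Matrix.of fun i p => _root_.vec (Pmat t m i) p

lemma Pbig_eq_sum {t m : ℕ} (i : Fin t) (p : (Fin t × Fin m) × (Fin t × Fin m)) :
    Pbig t m i p = ∑ x : Fin m, if p = ((i, x), (i, x)) then 1 else 0 := by
  obtain ⟨⟨c1, c2⟩, ⟨d1, d2⟩⟩ := p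
  simp only [Pbig, Pmat, _root_.vec, Matrix.of_apply, kroneckerMap_apply, Matrix.single,
    Matrix.one_apply, Prod.mk.injEq]
  by_cases h1 : c1 = i <;> by_cases h2 : d1 = i <;> by_cases h3 : d2 = c2 <;>
    subst_vars <;>
    simp_all [eq_comm, Finset.sum_ite_eq, Finset.sum_ite_eq', and_comm] <;>
    (have h : Finset.filter (fun x => c2 = x ∧ d2 = x) Finset.univ = ∅ :=
      Finset.filter_eq_empty_iff.mpr (by rintro x - ⟨rfl, rfl⟩; exact h3 rfl)
     simp [h])

lemma sum_sum_ite_eq {α γ M : Type*} [Fintype α] [Fintype γ]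
    [AddCommMonoid M] [DecidableEq α] (f : γ → α) (g : α → γ → M) :
    (∑ y : α, ∑ z : γ, if y = f z then g y z else 0) = ∑ z : γ, g (f z) z := by
  rw [Finset.sum_comm]
  simp [Finset.sum_ite_eq']

/-- ⟨A,B⟩_t = P·(A ⊗ B)·Pᵀ. -/
theorem blockIP_eq_P_kronecker_Pt {t m : ℕ}
    (A B : Matrix (Fin t × Fin m) (Fin t × Fin m) (ZMod 2)) :
    blockIP A B = Pbig t m * (A ⊗ₖ B) * (Pbig t m)ᵀ := by
  ext i j
  simp only [Matrix.mul_apply, transpose_apply, Pbig_eq_sum, Finset.sum_mul, Finset.mul_sum,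
    ite_mul, mul_ite, zero_mul, mul_zero, one_mul, mul_one]
  rw [Finset.sum_comm]
  simp only [Finset.sum_ite_eq', Finset.mem_univ, if_true]
  simp only [sum_sum_ite_eq]
  rw [Finset.sum_comm]
  simp [blockIP, kroneckerMap_apply]
end

section
/- Let t divide n and let A, B ∈ F_2^{n×n}. Then the rank of the t-block-wise inner product is bounded by rank(⟨A,B⟩_t) ≤ min(rank(A)·rank(B), t). -/
open Matrix

lemma exists_rank_factorization {F : Type*} [Field F] {m n : Type*} [Fintype m] [Fintype n]
    [DecidableEq n] (A : Matrix m n F) :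
    ∃ (C : Matrix m (Fin A.rank) F) (D : Matrix (Fin A.rank) n F), A = C * D := by
  set V := LinearMap.range A.mulVecLin with hV
  have hr : A.rank = Module.finrank F V := rfl
  let b : Module.Basis (Fin A.rank) F V := (Module.finBasis F V).reindex (finCongr hr.symm)
  have hcol : ∀ y : n, A.mulVec (Pi.single y 1) ∈ V := fun y => ⟨Pi.single y 1, rfl⟩
  refine ⟨Matrix.of fun x k => (b k : m → F) x,
    Matrix.of fun k y => b.repr ⟨A.mulVec (Pi.single y 1), hcol y⟩ k, ?_⟩
  ext x y
  have hA : A x y = A.mulVec (Pi.single y 1) x := by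
    simp [Matrix.mulVec, dotProduct, Pi.single_apply]
  rw [hA]
  have := b.sum_repr ⟨A.mulVec (Pi.single y 1), hcol y⟩
  calc A.mulVec (Pi.single y 1) x
      = ((⟨A.mulVec (Pi.single y 1), hcol y⟩ : V) : m → F) x := rfl
    _ = ((∑ k, b.repr ⟨A.mulVec (Pi.single y 1), hcol y⟩ k • b k : V) : m → F) x := by rw [this]
    _ = ∑ k, (b k : m → F) x * b.repr ⟨A.mulVec (Pi.single y 1), hcol y⟩ k := by
        push_cast [Submodule.coe_sum]
        simp [Finset.sum_apply, mul_comm]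

lemma sum_comm4 {M : Type*} [AddCommMonoid M] {i1 i2 i3 i4 : Type*}
    [Fintype i1] [Fintype i2] [Fintype i3] [Fintype i4] (f : i1 -> i2 -> i3 -> i4 -> M) :
    ∑ a, ∑ b, ∑ k, ∑ l, f a b k l = ∑ k, ∑ l, ∑ a, ∑ b, f a b k l := by
  calc ∑ a, ∑ b, ∑ k, ∑ l, f a b k l
      = ∑ a, ∑ k, ∑ b, ∑ l, f a b k l :=
        Finset.sum_congr rfl fun a _ => Finset.sum_comm
    _ = ∑ k, ∑ a, ∑ b, ∑ l, f a b k l := Finset.sum_comm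
    _ = ∑ k, ∑ a, ∑ l, ∑ b, f a b k l :=
        Finset.sum_congr rfl fun k _ => Finset.sum_congr rfl fun a _ => Finset.sum_comm
    _ = ∑ k, ∑ l, ∑ a, ∑ b, f a b k l :=
        Finset.sum_congr rfl fun k _ => Finset.sum_comm

/-- rank(⟨A,B⟩_t) ≤ min(rank(A)·rank(B), t). -/
theorem rank_blockIP_le {t m : ℕ}
    (A B : Matrix (Fin t × Fin m) (Fin t × Fin m) (ZMod 2)) :
    (blockIP A B).rank ≤ min (A.rank * B.rank) t := by
  refine le_min ?_ ?_
  · obtain ⟨C, D, hA⟩ := exists_rank_factorization A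
    obtain ⟨E, Ff, hB⟩ := exists_rank_factorization B
    set G : Matrix (Fin t) (Fin A.rank × Fin B.rank) (ZMod 2) :=
      Matrix.of fun i kl => ∑ a, C (i, a) kl.1 * E (i, a) kl.2 with hG
    set H : Matrix (Fin A.rank × Fin B.rank) (Fin t) (ZMod 2) :=
      Matrix.of fun kl j => ∑ b, D kl.1 (j, b) * Ff kl.2 (j, b) with hH
    have key : blockIP A B = G * H := by
      ext i j
      simp only [blockIP, Matrix.of_apply, Matrix.mul_apply, hA, hB, hG, hH]
      conv_rhs => rw [← Finset.univ_product_univ, Finset.sum_product]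
      simp only [Finset.sum_mul_sum]
      rw [sum_comm4]
      refine Finset.sum_congr rfl fun k _ => Finset.sum_congr rfl fun l _ =>
        Finset.sum_congr rfl fun a _ => Finset.sum_congr rfl fun b _ => ?_
      ring
    calc (blockIP A B).rank = (G * H).rank := by rw [key]
      _ ≤ G.rank := rank_mul_le_left G H
      _ ≤ Fintype.card (Fin A.rank × Fin B.rank) := rank_le_card_width G
      _ = A.rank * B.rank := by simp
  · calc (blockIP A B).rank ≤ Fintype.card (Fin t) := rank_le_card_width _
      _ = t := by simp
end

section
/- Let a₁, ..., a_k ∈ F_2^m be linearly independent and let h₁, ..., h_l ∈ F_2^m be linearly independent vectors lying in the orthogonal complement {h : ⟨a_p, h⟩ = 0 for all p ∈ [k]} (with respect to the standard bilinear form on F_2^m). Then the joint distribution of (a, h) obtained by first sampling a uniformly among linearly independent k-tuples and then h uniformly among linearly independent l-tuples in a^⊥ is identical to the distribution obtained by first sampling h uniformly among linearly independent l-tuples in F_2^m and then a uniformly among linearly independent k-tuples in h^⊥. -/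
open Matrix
open scoped Classical

/-- `orth a h` means every vector of the tuple `h` is orthogonal (w.r.t. the standard
bilinear form on F₂^m) to every vector of the tuple `a`. -/
def orth {m k l : ℕ} (a : Fin k → (Fin m → ZMod 2)) (h : Fin l → (Fin m → ZMod 2)) : Prop :=
  ∀ p i, (a p) ⬝ᵥ (h i) = 0

noncomputable def Ncard (l d : ℕ) : ℕ :=
  Nat.card {h : Fin l → (Fin d → ZMod 2) // LinearIndependent (ZMod 2) h}

lemma card_li_congr {V W : Type} [AddCommGroup V] [Module (ZMod 2) V]
    [AddCommGroup W] [Module (ZMod 2) W] (e : V ≃ₗ[ZMod 2] W) (l : ℕ) :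
    Nat.card {h : Fin l → V // LinearIndependent (ZMod 2) h}
      = Nat.card {h : Fin l → W // LinearIndependent (ZMod 2) h} := by
  apply Nat.card_congr
  refine Equiv.subtypeEquiv (Equiv.piCongrRight fun _ => e.toEquiv) (fun v => ?_)
  have := (LinearMap.linearIndependent_iff (e.toLinearMap) e.ker (v := v)).symm
  exact this

lemma card_orth (m k l : ℕ) (a : Fin k → (Fin m → ZMod 2))
    (ha : LinearIndependent (ZMod 2) a) :
    Nat.card {h : Fin l → (Fin m → ZMod 2) // LinearIndependent (ZMod 2) h ∧ orth a h}
      = Ncard l (m - k) := by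
  set W := LinearMap.ker ((Matrix.of a).mulVecLin) with hW
  have hmem : ∀ x : Fin m → ZMod 2, x ∈ W ↔ ∀ p, a p ⬝ᵥ x = 0 := by
    intro x
    simp [hW, LinearMap.mem_ker, Matrix.mulVecLin_apply, Matrix.mulVec, funext_iff]
  have hdim : Module.finrank (ZMod 2) W = m - k := by
    have h1 := LinearMap.finrank_range_add_finrank_ker ((Matrix.of a).mulVecLin)
    have h2 : Module.finrank (ZMod 2) (LinearMap.range ((Matrix.of a).mulVecLin)) = k := by
      have := LinearIndependent.rank_matrix (M := Matrix.of a) ha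
      simpa [Matrix.rank] using this
    have h3 : Module.finrank (ZMod 2) (Fin m → ZMod 2) = m := by simp
    rw [h2, h3] at h1
    rw [hW]
    omega
  have hdim2 : Module.finrank (ZMod 2) (Fin (m - k) → ZMod 2) = m - k := by simp
  obtain ⟨e⟩ := FiniteDimensional.nonempty_linearEquiv_of_finrank_eq (hdim.trans hdim2.symm)
  rw [Ncard, ← card_li_congr e]
  apply Nat.card_congr
  have liiff : ∀ h : Fin l → W, LinearIndependent (ZMod 2) (fun i => (h i : Fin m → ZMod 2))
      ↔ LinearIndependent (ZMod 2) h := by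
    intro h
    have := LinearMap.linearIndependent_iff (W.subtype) (Submodule.ker_subtype W) (v := h)
    exact this
  refine ⟨fun h => ⟨fun i => ⟨h.1 i, (hmem _).2 fun p => h.2.2 p i⟩, ?_⟩,
    fun h => ⟨fun i => (h.1 i : Fin m → ZMod 2), ?_, fun p i => (hmem _).1 (h.1 i).2 p⟩,
    fun h => rfl, fun h => rfl⟩
  · exact (liiff _).1 (by simpa using h.2.1)
  · exact (liiff _).2 h.2

lemma card_pairs (m k l : ℕ) :
    Nat.card {p : (Fin k → (Fin m → ZMod 2)) × (Fin l → (Fin m → ZMod 2)) //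
        LinearIndependent (ZMod 2) p.1 ∧ LinearIndependent (ZMod 2) p.2 ∧ orth p.1 p.2}
      = Ncard k m * Ncard l (m - k) := by
  have e : {p : (Fin k → (Fin m → ZMod 2)) × (Fin l → (Fin m → ZMod 2)) //
        LinearIndependent (ZMod 2) p.1 ∧ LinearIndependent (ZMod 2) p.2 ∧ orth p.1 p.2}
      ≃ Σ a : {a : Fin k → (Fin m → ZMod 2) // LinearIndependent (ZMod 2) a},
          {h : Fin l → (Fin m → ZMod 2) // LinearIndependent (ZMod 2) h ∧ orth a.1 h} :=
    ⟨fun p => ⟨⟨p.1.1, p.2.1⟩, ⟨p.1.2, p.2.2.1, p.2.2.2⟩⟩,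
     fun q => ⟨(q.1.1, q.2.1), q.1.2, q.2.2.1, q.2.2.2⟩, fun p => rfl, fun q => rfl⟩
  rw [Nat.card_congr e, Nat.card_eq_fintype_card, Fintype.card_sigma]
  have key : ∀ a : {a : Fin k → (Fin m → ZMod 2) // LinearIndependent (ZMod 2) a},
      Fintype.card {h : Fin l → (Fin m → ZMod 2) //
        LinearIndependent (ZMod 2) h ∧ orth a.1 h} = Ncard l (m - k) := fun a => by
    rw [← Nat.card_eq_fintype_card]; exact card_orth m k l a.1 a.2
  calc (∑ a : {a : Fin k → (Fin m → ZMod 2) // LinearIndependent (ZMod 2) a},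
        Fintype.card {h : Fin l → (Fin m → ZMod 2) //
          LinearIndependent (ZMod 2) h ∧ orth a.1 h})
      = ∑ _a : {a : Fin k → (Fin m → ZMod 2) // LinearIndependent (ZMod 2) a},
          Ncard l (m - k) := Finset.sum_congr rfl fun a _ => key a
    _ = Ncard k m * Ncard l (m - k) := by
        simp [Ncard, Nat.card_eq_fintype_card, Finset.sum_const, Finset.card_univ]

lemma orth_comm {m k l : ℕ} {a : Fin k → (Fin m → ZMod 2)} {h : Fin l → (Fin m → ZMod 2)} :
    orth a h ↔ orth h a :=
  ⟨fun H p i => by rw [dotProduct_comm]; exact H i p,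
   fun H p i => by rw [dotProduct_comm]; exact H i p⟩

lemma prod_eq (m k l : ℕ) :
    Ncard k m * Ncard l (m - k) = Ncard l m * Ncard k (m - l) := by
  rw [← card_pairs m k l, ← card_pairs m l k]
  apply Nat.card_congr
  exact ⟨fun p => ⟨(p.1.2, p.1.1), p.2.2.1, p.2.1, orth_comm.1 p.2.2.2⟩,
    fun q => ⟨(q.1.2, q.1.1), q.2.2.1, q.2.1, orth_comm.1 q.2.2.2⟩,
    fun p => rfl, fun q => rfl⟩


/-- Density at (a, h) of the process: sample `a` uniformly among linearly independent
k-tuples in F₂^m, then `h` uniformly among linearly independent l-tuples in a^⊥. -/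
noncomputable def densityAH (m k l : ℕ)
    (a : Fin k → (Fin m → ZMod 2)) (h : Fin l → (Fin m → ZMod 2)) : ℝ :=
  (if LinearIndependent (ZMod 2) a then 1 else 0)
    / (Nat.card {a' : Fin k → (Fin m → ZMod 2) // LinearIndependent (ZMod 2) a'} : ℝ)
  * ((if LinearIndependent (ZMod 2) h ∧ orth a h then 1 else 0)
    / (Nat.card {h' : Fin l → (Fin m → ZMod 2) //
        LinearIndependent (ZMod 2) h' ∧ orth a h'} : ℝ))

/-- Density at (a, h) of the process: sample `h` uniformly among linearly independent
l-tuples in F₂^m, then `a` uniformly among linearly independent k-tuples in h^⊥. -/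
noncomputable def densityHA (m k l : ℕ)
    (a : Fin k → (Fin m → ZMod 2)) (h : Fin l → (Fin m → ZMod 2)) : ℝ :=
  (if LinearIndependent (ZMod 2) h then 1 else 0)
    / (Nat.card {h' : Fin l → (Fin m → ZMod 2) // LinearIndependent (ZMod 2) h'} : ℝ)
  * ((if LinearIndependent (ZMod 2) a ∧ orth a h then 1 else 0)
    / (Nat.card {a' : Fin k → (Fin m → ZMod 2) //
        LinearIndependent (ZMod 2) a' ∧ orth a' h} : ℝ))

/-- The two sampling orders (first a then h ∈ a^⊥, or first h then a ∈ h^⊥) yield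
identical joint distributions. -/
theorem densityAH_eq_densityHA (m k l : ℕ) (hkl : k + l ≤ m)
    (a : Fin k → (Fin m → ZMod 2)) (h : Fin l → (Fin m → ZMod 2)) :
    densityAH m k l a h = densityHA m k l a h := by
  classical
  by_cases hLa : LinearIndependent (ZMod 2) a
  · by_cases hLh : LinearIndependent (ZMod 2) h
    · by_cases ho : orth a h
      · have c1 : Nat.card {h' : Fin l → (Fin m → ZMod 2) //
            LinearIndependent (ZMod 2) h' ∧ orth a h'} = Ncard l (m - k) :=
          card_orth m k l a hLa
        have c2 : Nat.card {a' : Fin k → (Fin m → ZMod 2) //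
            LinearIndependent (ZMod 2) a' ∧ orth a' h} = Ncard k (m - l) := by
          rw [← card_orth m l k h hLh]
          exact Nat.card_congr (Equiv.subtypeEquiv (Equiv.refl _) fun a' => by
            simp [orth_comm (a := a') (h := h)])
        rw [densityAH, densityHA, c1, c2, if_pos hLa, if_pos hLh,
          if_pos ⟨hLh, ho⟩, if_pos ⟨hLa, ho⟩]
        rw [div_mul_div_comm, div_mul_div_comm, one_mul, ← Nat.cast_mul, ← Nat.cast_mul]
        have key : Nat.card {a' : Fin k → (Fin m → ZMod 2) //
              LinearIndependent (ZMod 2) a'} * Ncard l (m - k)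
            = Nat.card {h' : Fin l → (Fin m → ZMod 2) //
              LinearIndependent (ZMod 2) h'} * Ncard k (m - l) := prod_eq m k l
        rw [key]
      · simp [densityAH, densityHA, ho]
    · simp [densityAH, densityHA, hLh]
  · simp [densityAH, densityHA, hLa]
end
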